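/- Let T̄ be an irreducible stochastic n×n matrix with stationary distribution π̄ and let D be an n×n matrix with π̄ D 1 ≠ 0 such that T(ε) = T̄ − εD is substochastic with spectral radius < 1 for all small ε > 0. Then ε · [I − T(ε)]^{-1} converges as ε → 0⁺ to X_{−1} = (1/(π̄ D 1)) 1 π̄. -/

import Mathlib

open Matrix BigOperators Filter Topology

lemma stmt11_ker {n : Type*} [Fintype n] [DecidableEq n] [Nonempty n]
    (T : Matrix n n ℝ)
    (hnonneg : ∀ i j, 0 ≤ T i j)
    (hstoch : ∀ i, ∑ j, T i j = 1)
    (hirr : ∀ i j, ∃ k, 0 < k ∧ 0 < (T ^ k) i j)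
    (v : n → ℝ) (hv : T *ᵥ v = v) : ∀ i j, v i = v j := by
  have hpow : ∀ k, (T ^ k) *ᵥ v = v := by
    intro k
    induction k with
    | zero => simp
    | succ k ih => rw [pow_succ, ← mulVec_mulVec, hv, ih]
  have hpnn : ∀ k i j, 0 ≤ (T ^ k) i j := by
    intro k
    induction k with
    | zero =>
      intro i j
      by_cases h : i = j <;> simp [pow_zero, Matrix.one_apply, h]
    | succ k ih =>
      intro i j
      rw [pow_succ, Matrix.mul_apply]
      exact Finset.sum_nonneg fun l _ => mul_nonneg (ih i l) (hnonneg l j)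
  have hps : ∀ k i, ∑ j, (T ^ k) i j = 1 := by
    intro k
    induction k with
    | zero => intro i; simp [pow_zero, Matrix.one_apply]
    | succ k ih =>
      intro i
      rw [pow_succ]
      simp only [Matrix.mul_apply]
      rw [Finset.sum_comm]
      simp_rw [← Finset.mul_sum, hstoch, mul_one]
      exact ih i
  intro i j
  obtain ⟨i₀, -, hmax⟩ := Finset.exists_max_image Finset.univ v ⟨Classical.arbitrary n, Finset.mem_univ _⟩
  suffices h : ∀ j, v j = v i₀ by rw [h i, h j]
  intro j
  obtain ⟨k, -, hkpos⟩ := hirr i₀ j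
  have hsum : ∑ l, (T ^ k) i₀ l * (v i₀ - v l) = 0 := by
    have h1 : ((T ^ k) *ᵥ v) i₀ = v i₀ := by rw [hpow]
    simp only [Matrix.mulVec, dotProduct] at h1
    simp_rw [mul_sub, Finset.sum_sub_distrib, ← Finset.sum_mul, hps, one_mul, h1, sub_self]
  have hterm := (Finset.sum_eq_zero_iff_of_nonneg (fun l _ =>
    mul_nonneg (hpnn k i₀ l) (sub_nonneg.2 (hmax l (Finset.mem_univ l))))).mp hsum j (Finset.mem_univ j)
  have := mul_eq_zero.mp hterm
  rcases this with h | h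
  · exact absurd h (ne_of_gt hkpos)
  · linarith [sub_eq_zero.mp h]


lemma stmt11_adj_proj {n : Type*} [Fintype n] [DecidableEq n] [Nonempty n]
    (p : n → ℝ) (hp : ∑ i, p i = 1) :
    adjugate (1 - Matrix.of (fun _ j : n => p j)) = Matrix.of (fun _ j : n => p j) := by
  set P : Matrix n n ℝ := Matrix.of (fun _ j : n => p j) with hP
  have hPmul : P * P = P := by
    ext i j
    simp only [Matrix.mul_apply, hP, Matrix.of_apply]
    rw [← Finset.sum_mul, hp, one_mul]
  have hdet : ∀ a : ℝ, (1 + a • P).det = 1 + a := by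
    intro a
    have hcr : a • P = Matrix.replicateCol Unit (fun _ => a) * Matrix.replicateRow Unit p := by
      ext i j
      simp [hP, Matrix.mul_apply, mul_comm]
    rw [hcr, Matrix.det_one_add_replicateCol_mul_replicateRow]
    simp [dotProduct, ← Finset.sum_mul, hp]
  have key : ∀ a : ℝ, a ≠ -1 →
      adjugate (1 + a • P) = (1 + a) • (1 : Matrix n n ℝ) - a • P := by
    intro a ha
    have h1a : (1 : ℝ) + a ≠ 0 := by
      intro h; apply ha; linarith
    have hinv : (1 + a • P) * (1 - (a / (1 + a)) • P) = 1 := by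
      have expand : (1 + a • P) * (1 - (a / (1 + a)) • P)
          = 1 + (a - (a / (1 + a)) - a * (a / (1 + a))) • P := by
        simp only [Matrix.mul_sub, Matrix.add_mul, Matrix.mul_one, Matrix.one_mul,
          Matrix.mul_smul, Matrix.smul_mul, hPmul, smul_add, smul_smul, sub_smul, ← hP]
        module
      rw [expand]
      have : a - (a / (1 + a)) - a * (a / (1 + a)) = 0 := by
        field_simp
        ring
      rw [this, zero_smul, add_zero]
    have hinveq : (1 + a • P)⁻¹ = 1 - (a / (1 + a)) • P := Matrix.inv_eq_right_inv hinv
    have hadj : adjugate (1 + a • P) = (1 + a • P).det • (1 + a • P)⁻¹ := by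
      rw [Matrix.inv_def, smul_smul, hdet, Ring.inverse_eq_inv, mul_inv_cancel₀ h1a, one_smul]
    rw [hadj, hdet, hinveq, smul_sub, smul_smul]
    congr 2
    field_simp
  -- now take the limit a → -1
  have hcont : Continuous fun a : ℝ => adjugate (1 + a • P) :=
    (continuous_const.add (continuous_id.smul continuous_const)).matrix_adjugate
  have hcont2 : Continuous fun a : ℝ => (1 + a) • (1 : Matrix n n ℝ) - a • P :=
    ((continuous_const.add continuous_id).smul continuous_const).sub
      (continuous_id.smul continuous_const)
  have h1 : Tendsto (fun a : ℝ => adjugate (1 + a • P)) (𝓝[≠] (-1))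
      (𝓝 (adjugate (1 + (-1 : ℝ) • P))) :=
    (hcont.continuousAt.tendsto).mono_left nhdsWithin_le_nhds
  have h2 : Tendsto (fun a : ℝ => adjugate (1 + a • P)) (𝓝[≠] (-1))
      (𝓝 ((1 + (-1 : ℝ)) • (1 : Matrix n n ℝ) - (-1 : ℝ) • P)) := by
    refine Tendsto.congr' ?_ ((hcont2.continuousAt.tendsto).mono_left nhdsWithin_le_nhds)
    filter_upwards [self_mem_nhdsWithin] with a ha
    exact (key a ha).symm
  have heq := tendsto_nhds_unique h1 h2
  have hrw : (1 : Matrix n n ℝ) + (-1 : ℝ) • P = 1 - P := by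
    rw [neg_smul, one_smul, ← sub_eq_add_neg]
  rw [hrw] at heq
  rw [heq]
  norm_num

/-- `ε [I - (T̄ - εD)]⁻¹ → X₋₁ = (1/(π̄D1)) 1π̄` as `ε → 0⁺`. -/
theorem stmt11 {n : Type*} [Fintype n] [DecidableEq n] [Nonempty n]
    (Tbar : Matrix n n ℝ)
    (hnonneg : ∀ i j, 0 ≤ Tbar i j)
    (hstoch : ∀ i, ∑ j, Tbar i j = 1)
    (hirr : ∀ i j, ∃ k, 0 < k ∧ 0 < (Tbar ^ k) i j)
    (pibar : n → ℝ)
    (hstat : pibar ᵥ* Tbar = pibar)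
    (hnorm : ∑ i, pibar i = 1)
    (D : Matrix n n ℝ)
    (hD : ∑ i, (pibar ᵥ* D) i ≠ 0)
    (hsub : ∃ ε₀ > (0 : ℝ), ∀ ε : ℝ, 0 < ε → ε < ε₀ →
      (∀ i j, 0 ≤ (Tbar - ε • D) i j) ∧
      (∀ i, ∑ j, (Tbar - ε • D) i j ≤ 1) ∧
      (∀ μ ∈ spectrum ℂ ((Tbar - ε • D).map (Complex.ofReal ·)),
        ‖μ‖ < 1)) :
    Tendsto (fun ε : ℝ => ε • (1 - (Tbar - ε • D))⁻¹)
      (𝓝[>] (0 : ℝ))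
      (𝓝 ((1 / ∑ i, (pibar ᵥ* D) i) • Matrix.of (fun _ j => pibar j))) := by
  classical
  set B : Matrix n n ℝ := 1 - Tbar with hB
  set P : Matrix n n ℝ := Matrix.of (fun _ j : n => pibar j) with hP
  set c : ℝ := ∑ i, (pibar ᵥ* D) i with hc
  have hsmulM : ∀ (v : n → ℝ) (a : ℝ) (N : Matrix n n ℝ), v ᵥ* (a • N) = a • (v ᵥ* N) := by
    intro v a N
    ext j
    simp [Matrix.vecMul, dotProduct, Finset.mul_sum, mul_left_comm]
  -- row sums of B are zero
  have hBrow : ∀ i, ∑ j, B i j = 0 := by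
    intro i
    simp only [hB, Matrix.sub_apply, Finset.sum_sub_distrib, hstoch]
    simp [Finset.sum_ite_eq, Matrix.one_apply]
  -- pibar is a left null vector of B
  have hpiB : pibar ᵥ* B = 0 := by
    rw [hB, Matrix.vecMul_sub, Matrix.vecMul_one, hstat, sub_self]
  -- kernel of B consists of constant vectors
  have hker : ∀ v : n → ℝ, B *ᵥ v = 0 → ∀ i j, v i = v j := by
    intro v hv
    refine stmt11_ker Tbar hnonneg hstoch hirr v ?_
    have : (1 - Tbar) *ᵥ v = 0 := hv
    rw [Matrix.sub_mulVec, Matrix.one_mulVec, sub_eq_zero] at this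
    exact this.symm
  set M : Matrix n n ℝ := B + P with hM
  have hpiP : pibar ᵥ* P = pibar := by
    ext j
    simp only [Matrix.vecMul, dotProduct, hP, Matrix.of_apply]
    rw [← Finset.sum_mul, hnorm, one_mul]
  have hpiM : pibar ᵥ* M = pibar := by
    rw [hM, Matrix.vecMul_add, hpiB, hpiP, zero_add]
  -- M is invertible
  have hMdet : M.det ≠ 0 := by
    intro h0
    obtain ⟨v, hvne, hv⟩ := Matrix.exists_mulVec_eq_zero_iff.mpr h0
    have hpiv : pibar ⬝ᵥ v = 0 := by
      have := congrArg (fun w => pibar ⬝ᵥ w) hv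
      simpa [Matrix.dotProduct_mulVec, hpiM] using this
    have hPv : P *ᵥ v = 0 := by
      ext i
      simp only [Matrix.mulVec, dotProduct, hP, Matrix.of_apply, Pi.zero_apply]
      exact hpiv
    have hBv : B *ᵥ v = 0 := by
      have := congrArg (fun N => N) hv
      rw [hM, Matrix.add_mulVec, hPv, add_zero] at hv
      exact hv
    have hconst := hker v hBv
    obtain ⟨i, hi⟩ := Function.ne_iff.mp hvne
    simp only [Pi.zero_apply] at hi
    apply hi
    have : pibar ⬝ᵥ v = v i := by
      simp only [dotProduct]
      calc ∑ j, pibar j * v j = ∑ j, pibar j * v i := by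
            refine Finset.sum_congr rfl fun j _ => by rw [hconst j i]
        _ = v i := by rw [← Finset.sum_mul, hnorm, one_mul]
    rw [← this, hpiv]
  -- factorization B = M * (1 - P)
  have hBP : B * P = 0 := by
    ext i j
    simp only [Matrix.mul_apply, hP, Matrix.of_apply, Matrix.zero_apply]
    rw [← Finset.sum_mul, hBrow, zero_mul]
  have hMP : M * (1 - P) = B := by
    have hPP : P * P = P := by
      ext i j
      simp only [Matrix.mul_apply, hP, Matrix.of_apply]
      rw [← Finset.sum_mul, hnorm, one_mul]
    rw [hM, Matrix.add_mul, Matrix.mul_sub, Matrix.mul_sub, Matrix.mul_one, Matrix.mul_one,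
      hBP, hPP]
    abel
  -- adjugate of B
  have hadjB : adjugate B = M.det • P := by
    have h1 : adjugate B = P * adjugate M := by
      rw [← hMP, Matrix.adjugate_mul_distrib, stmt11_adj_proj pibar hnorm, ← hP]
    have h2 : pibar ᵥ* adjugate M = M.det • pibar := by
      have := congrArg (fun N => pibar ᵥ* N) (Matrix.mul_adjugate M)
      simp only [← Matrix.vecMul_vecMul, hpiM] at this
      rw [this, hsmulM, Matrix.vecMul_one]
    rw [h1]
    ext i j
    simp only [Matrix.mul_apply, hP, Matrix.of_apply, Matrix.smul_apply, smul_eq_mul]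
    have := congrFun h2 j
    simpa [Matrix.vecMul, dotProduct] using this
  -- the key scalar function
  set φ : ℝ → ℝ := fun ε => ∑ j, ∑ i, (pibar ᵥ* D) i * adjugate (B + ε • D) i j with hφ
  have hdetA : ∀ ε : ℝ, (B + ε • D).det = ε * φ ε := by
    intro ε
    have h := congrArg (fun N => pibar ᵥ* N) (Matrix.mul_adjugate (B + ε • D))
    simp only [← Matrix.vecMul_vecMul] at h
    have hpiA : pibar ᵥ* (B + ε • D) = ε • (pibar ᵥ* D) := by
      rw [Matrix.vecMul_add, hpiB, zero_add, hsmulM]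
    rw [hpiA, Matrix.smul_vecMul, hsmulM, Matrix.vecMul_one] at h
    have hsum := congrArg (fun w : n → ℝ => ∑ j, w j) h
    simp only [Pi.smul_apply, smul_eq_mul, ← Finset.mul_sum] at hsum
    rw [hnorm, mul_one] at hsum
    rw [← hsum]
    simp only [hφ]
    exact congrArg (ε * ·) (Finset.sum_congr rfl fun j _ => by
      simp [Matrix.vecMul, dotProduct])
  have hφ0 : φ 0 = M.det * c := by
    rw [hφ]
    simp only [zero_smul, add_zero, hadjB, Matrix.smul_apply, hP, Matrix.of_apply, smul_eq_mul]
    rw [hc]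
    rw [Finset.sum_comm]
    calc ∑ i, ∑ j, (pibar ᵥ* D) i * (M.det * pibar j)
        = ∑ i, (pibar ᵥ* D) i * M.det * ∑ j, pibar j := by
          refine Finset.sum_congr rfl fun i _ => ?_
          rw [Finset.mul_sum]
          refine Finset.sum_congr rfl fun j _ => by ring
      _ = M.det * ∑ i, (pibar ᵥ* D) i := by
          rw [hnorm]
          simp only [mul_one]
          rw [← Finset.sum_mul]
          ring
  have hφ0ne : φ 0 ≠ 0 := by
    rw [hφ0]
    exact mul_ne_zero hMdet hD
  -- continuity
  have hAc : Continuous fun ε : ℝ => B + ε • D :=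
    continuous_const.add (continuous_id.smul continuous_const)
  have hadjc : Continuous fun ε : ℝ => adjugate (B + ε • D) := hAc.matrix_adjugate
  have hφc : Continuous φ := by
    rw [hφ]
    exact continuous_finset_sum _ fun j _ => continuous_finset_sum _ fun i _ =>
      continuous_const.mul (hadjc.matrix_elem i j)
  have hFc : ContinuousAt (fun ε : ℝ => (φ ε)⁻¹ • adjugate (B + ε • D)) 0 :=
    ((hφc.continuousAt).inv₀ hφ0ne).smul hadjc.continuousAt
  have hF0 : (φ 0)⁻¹ • adjugate (B + (0:ℝ) • D) = (1 / c) • P := by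
    rw [zero_smul, add_zero, hadjB, hφ0, smul_smul, one_div, mul_inv,
      mul_comm (M.det)⁻¹ c⁻¹, mul_assoc, inv_mul_cancel₀ hMdet, mul_one]
  have htend : Tendsto (fun ε : ℝ => (φ ε)⁻¹ • adjugate (B + ε • D)) (𝓝[>] (0:ℝ))
      (𝓝 ((1 / c) • P)) := by
    rw [← hF0]
    exact hFc.tendsto.mono_left nhdsWithin_le_nhds
  refine Tendsto.congr' ?_ htend
  have hev : ∀ᶠ ε : ℝ in 𝓝[>] 0, φ ε ≠ 0 :=
    ((hφc.continuousAt.eventually_ne hφ0ne)).filter_mono nhdsWithin_le_nhds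
  filter_upwards [hev, self_mem_nhdsWithin] with ε hφε (hεpos : (0:ℝ) < ε)
  have hεne : ε ≠ 0 := ne_of_gt hεpos
  have hA : 1 - (Tbar - ε • D) = B + ε • D := by rw [hB]; abel
  have hdet : (B + ε • D).det = ε * φ ε := hdetA ε
  have hdetne : (B + ε • D).det ≠ 0 := by rw [hdet]; exact mul_ne_zero hεne hφε
  rw [hA.symm] at *
  rw [hA]
  rw [Matrix.inv_def, Ring.inverse_eq_inv, hdet, smul_smul]
  congr 1
  rw [mul_inv]
  field_simp
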